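/- Let M be a finite labeled transition system with states Q, labels S, initial states Q₀, transition relation Δ, and accepting set Acc ⊆ Q; let D, A, ξ and v be as defined. Then for every n ≥ 0, ξ^{n+1} ⬝ v = (α_n, α⃗_{n+1}, β⃗_{n+1}) as a vector indexed by Unit ⊕ Q ⊕ Q, where α⃗_{n+1} = (α_{n+1}(q))_{q∈Q} and β⃗_{n+1} = (β_{n+1}(q))_{q∈Q}. In particular, the first entry of ξ^{n+1} ⬝ v equals α_n. -/

import Mathlib

open scoped Classical

/-- A finite labeled transition system: a set of initial states and a transition relation. -/
structure LTS (Q S : Type*) where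
  init : Set Q
  trans : Set (Q × S × Q)

variable {Q S : Type*} [Fintype Q] [Fintype S]

/-- The finite set of paths of length `n` of an LTS: pairs of a state sequence of length
`n+1` starting in an initial state and a word of length `n` driving the transitions. -/
noncomputable def pathFinset (M : LTS Q S) (n : ℕ) :
    Finset ((Fin (n + 1) → Q) × (Fin n → S)) :=
  Finset.univ.filter (fun p =>
    p.1 0 ∈ M.init ∧ ∀ i : Fin n, (p.1 i.castSucc, p.2 i, p.1 i.succ) ∈ M.trans)

/-- `beta M n q` is the number of paths of length `n` of `M` ending in state `q`. -/
noncomputable def beta (M : LTS Q S) (n : ℕ) (q : Q) : ℕ :=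
  ((pathFinset M n).filter (fun p => p.1 (Fin.last n) = q)).card

/-- `alpha M Acc n q` is the total number of visits to accepting states (from `Acc`)
summed over all paths of length `n` of `M` ending in state `q`. -/
noncomputable def alpha (M : LTS Q S) (Acc : Set Q) (n : ℕ) (q : Q) : ℕ :=
  ∑ p ∈ (pathFinset M n).filter (fun p => p.1 (Fin.last n) = q),
    (Finset.univ.filter (fun i : Fin (n + 1) => p.1 i ∈ Acc)).card

/-- `alphaTot M Acc n` is the total number of visits to accepting states over all
paths of length `n` of `M`. -/
noncomputable def alphaTot (M : LTS Q S) (Acc : Set Q) (n : ℕ) : ℕ :=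
  ∑ q : Q, alpha M Acc n q

/-- The predecessor matrix: `predMatrix M i j` is the number of labels `a` with a
transition `(j, a, i)`. -/
noncomputable def predMatrix (M : LTS Q S) : Matrix Q Q ℕ :=
  fun i j => (Finset.univ.filter (fun a : S => (j, a, i) ∈ M.trans)).card

/-- The accepting matrix: agrees with the predecessor matrix on rows indexed by accepting
states and is zero elsewhere. -/
noncomputable def accMatrix (M : LTS Q S) (Acc : Set Q) : Matrix Q Q ℕ :=
  fun i j => if i ∈ Acc then predMatrix M i j else 0

/-- The recurrence matrix `ξ = [[0, 1ᵀ, 0ᵀ], [0, D, A], [0, 0, D]]`, indexed by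
`Unit ⊕ Q ⊕ Q`. -/
noncomputable def xi (M : LTS Q S) (Acc : Set Q) :
    Matrix (Unit ⊕ Q ⊕ Q) (Unit ⊕ Q ⊕ Q) ℕ := fun i j =>
  match i, j with
  | Sum.inl _, Sum.inr (Sum.inl _) => 1
  | Sum.inr (Sum.inl i'), Sum.inr (Sum.inl j') => predMatrix M i' j'
  | Sum.inr (Sum.inl i'), Sum.inr (Sum.inr j') => accMatrix M Acc i' j'
  | Sum.inr (Sum.inr i'), Sum.inr (Sum.inr j') => predMatrix M i' j'
  | _, _ => 0

/-- The initial condition vector `v = (0, α⃗₀, β⃗₀)`: `β⃗₀` is the indicator vector of the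
initial states, `α⃗₀` the indicator vector of states both initial and accepting. -/
noncomputable def initVec (M : LTS Q S) (Acc : Set Q) : (Unit ⊕ Q ⊕ Q) → ℕ :=
  Sum.elim (fun _ => 0)
    (Sum.elim (fun q => if q ∈ M.init ∧ q ∈ Acc then 1 else 0)
      (fun q => if q ∈ M.init then 1 else 0))

lemma mem_pathFinset_snoc (M : LTS Q S) (n : ℕ) (q : Q)
    (p : (Fin (n + 1) → Q) × (Fin n → S)) (a : S)
    (hp : p ∈ pathFinset M n) (ha : (p.1 (Fin.last n), a, q) ∈ M.trans) :
    ((Fin.snoc p.1 q, Fin.snoc p.2 a) : (Fin (n+2) → Q) × (Fin (n+1) → S)) ∈ pathFinset M (n+1) := by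
  simp only [pathFinset, Finset.mem_filter, Finset.mem_univ, true_and] at hp ⊢
  constructor
  · have : ((0 : Fin (n+2))) = (0 : Fin (n+1)).castSucc := by simp
    rw [this, Fin.snoc_castSucc]
    exact hp.1
  · intro i
    refine Fin.lastCases ?_ ?_ i
    · simpa [Fin.snoc_castSucc, Fin.snoc_last, Fin.succ_last] using ha
    · intro j
      have h3 : (j.castSucc).succ = (j.succ).castSucc := (Fin.succ_castSucc j).symm
      simp only [Fin.snoc_castSucc, Fin.snoc_last, h3]
      exact hp.2 j

lemma sum_filter_path_succ (M : LTS Q S) (n : ℕ) (q : Q)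
    (f : ((Fin (n + 2) → Q) × (Fin (n + 1) → S)) → ℕ) :
    ∑ p ∈ (pathFinset M (n+1)).filter (fun p => p.1 (Fin.last (n+1)) = q), f p =
    ∑ x ∈ ((pathFinset M n) ×ˢ (Finset.univ : Finset S)).filter
        (fun x => (x.1.1 (Fin.last n), x.2, q) ∈ M.trans),
      f (Fin.snoc x.1.1 q, Fin.snoc x.1.2 x.2) := by
  refine Finset.sum_nbij'
    (i := fun p => ((Fin.init p.1, Fin.init p.2), p.2 (Fin.last n)))
    (j := fun x => (Fin.snoc x.1.1 q, Fin.snoc x.1.2 x.2)) ?_ ?_ ?_ ?_ ?_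
  · intro p hp
    simp only [Finset.mem_filter, pathFinset, Finset.mem_univ, true_and,
      Finset.mem_product] at hp ⊢
    obtain ⟨⟨h0, htr⟩, hend⟩ := hp
    refine ⟨⟨⟨h0, ?_⟩, trivial⟩, ?_⟩
    · intro i
      have := htr i.castSucc
      simpa only [Fin.init, Fin.succ_castSucc] using this
    · have := htr (Fin.last n)
      simpa [Fin.init, Fin.succ_last, hend] using this
  · intro x hx
    simp only [Finset.mem_filter, Finset.mem_product] at hx
    refine Finset.mem_filter.2 ⟨mem_pathFinset_snoc M n q x.1 x.2 hx.1.1 hx.2, ?_⟩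
    simp [Fin.snoc_last]
  · intro p hp
    simp only [Finset.mem_filter] at hp
    have hend := hp.2
    ext : 1 <;> simp only
    · rw [← hend, Fin.snoc_init_self]
    · rw [Fin.snoc_init_self]
  · intro x hx
    ext : 2 <;> simp [Fin.init, Fin.snoc_castSucc, Fin.snoc_last]
  · intro p hp
    simp only [Finset.mem_filter] at hp
    congr 1
    ext : 1 <;> simp only
    · rw [← hp.2, Fin.snoc_init_self]
    · rw [Fin.snoc_init_self]

/-- fiberwise version -/
lemma sum_path_succ (M : LTS Q S) (n : ℕ) (q : Q)
    (f : ((Fin (n + 2) → Q) × (Fin (n + 1) → S)) → ℕ) :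
    ∑ p ∈ (pathFinset M (n+1)).filter (fun p => p.1 (Fin.last (n+1)) = q), f p =
    ∑ j : Q, ∑ p ∈ (pathFinset M n).filter (fun p => p.1 (Fin.last n) = j),
      ∑ a ∈ Finset.univ.filter (fun a : S => (j, a, q) ∈ M.trans),
        f (Fin.snoc p.1 q, Fin.snoc p.2 a) := by
  classical
  rw [sum_filter_path_succ]
  rw [Finset.sum_filter, Finset.sum_product]
  rw [← Finset.sum_fiberwise (g := fun p => p.1 (Fin.last n))
    (s := pathFinset M n)
    (f := fun p => ∑ a : S, if (p.1 (Fin.last n), a, q) ∈ M.trans then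
      f (Fin.snoc p.1 q, Fin.snoc p.2 a) else 0)]
  refine Finset.sum_congr rfl fun j _ => Finset.sum_congr rfl fun p hp => ?_
  have hj : p.1 (Fin.last n) = j := (Finset.mem_filter.1 hp).2
  rw [Finset.sum_filter, hj]

lemma beta_succ (M : LTS Q S) (n : ℕ) (q : Q) :
    beta M (n+1) q = ∑ j : Q, predMatrix M q j * beta M n j := by
  unfold beta
  rw [Finset.card_eq_sum_ones, sum_path_succ M n q (fun _ => 1)]
  refine Finset.sum_congr rfl fun j _ => ?_
  rw [Finset.sum_congr rfl (fun p _ => by rw [Finset.sum_const, smul_eq_mul, mul_one]),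
    Finset.sum_const, smul_eq_mul, mul_comm]
  rfl

lemma snoc_visits (Acc : Set Q) (n : ℕ) (g : Fin (n+1) → Q) (q : Q) :
    (Finset.univ.filter (fun i : Fin (n+2) => (Fin.snoc g q : Fin (n+2) → Q) i ∈ Acc)).card =
    (Finset.univ.filter (fun i : Fin (n+1) => g i ∈ Acc)).card + (if q ∈ Acc then 1 else 0) := by
  rw [Finset.card_filter, Finset.card_filter, Fin.sum_univ_castSucc]
  simp [Fin.snoc_castSucc, Fin.snoc_last]

lemma alpha_succ (M : LTS Q S) (Acc : Set Q) (n : ℕ) (q : Q) :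
    alpha M Acc (n+1) q = ∑ j : Q, predMatrix M q j * alpha M Acc n j
      + ∑ j : Q, accMatrix M Acc q j * beta M n j := by
  unfold alpha
  rw [sum_path_succ]
  have key : ∀ j : Q, ∑ p ∈ (pathFinset M n).filter (fun p => p.1 (Fin.last n) = j),
      ∑ a ∈ Finset.univ.filter (fun a : S => (j, a, q) ∈ M.trans),
        (Finset.univ.filter (fun i : Fin (n+2) =>
          (Fin.snoc p.1 q : Fin (n+2) → Q) i ∈ Acc)).card
      = predMatrix M q j * alpha M Acc n j + accMatrix M Acc q j * beta M n j := by
    intro j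
    have : ∀ p : (Fin (n+1) → Q) × (Fin n → S),
        ∑ a ∈ Finset.univ.filter (fun a : S => (j, a, q) ∈ M.trans),
          (Finset.univ.filter (fun i : Fin (n+2) =>
            (Fin.snoc p.1 q : Fin (n+2) → Q) i ∈ Acc)).card
        = predMatrix M q j * ((Finset.univ.filter (fun i : Fin (n+1) => p.1 i ∈ Acc)).card
            + (if q ∈ Acc then 1 else 0)) := by
      intro p
      rw [Finset.sum_congr rfl (fun a _ => snoc_visits Acc n p.1 q), Finset.sum_const,
        smul_eq_mul]
      rfl
    rw [Finset.sum_congr rfl (fun p _ => this p)]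
    simp only [mul_add]
    rw [Finset.sum_add_distrib, ← Finset.mul_sum, Finset.sum_const, smul_eq_mul]
    have hb : (Finset.filter (fun p => p.1 (Fin.last n) = j) (pathFinset M n)).card
        = beta M n j := rfl
    have ha : ∑ p ∈ Finset.filter (fun p => p.1 (Fin.last n) = j) (pathFinset M n),
        (Finset.filter (fun i => p.1 i ∈ Acc) Finset.univ).card = alpha M Acc n j := rfl
    rw [hb, ha]
    unfold accMatrix
    split_ifs with h
    · ring
    · simp
  rw [Finset.sum_congr rfl (fun j _ => key j), Finset.sum_add_distrib]
  rfl

lemma pathFinset_zero (M : LTS Q S) (q : Q) :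
    (pathFinset M 0).filter (fun p => p.1 (Fin.last 0) = q) =
    if q ∈ M.init then {((fun _ => q), (fun i => i.elim0))} else ∅ := by
  ext p
  simp only [pathFinset, Finset.mem_filter, Finset.mem_univ, true_and]
  have hlast : (Fin.last 0) = 0 := rfl
  constructor
  · rintro ⟨⟨h0, -⟩, hend⟩
    rw [hlast] at hend
    rw [if_pos (hend ▸ h0)]
    simp only [Finset.mem_singleton]
    ext x
    · have hx : x = 0 := Fin.eq_zero x
      rw [hx]; exact hend
    · exact x.elim0
  · intro hp
    split_ifs at hp with h
    · simp only [Finset.mem_singleton] at hp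
      subst hp
      exact ⟨⟨h, fun i => i.elim0⟩, rfl⟩
    · simp at hp

lemma beta_zero (M : LTS Q S) (q : Q) :
    beta M 0 q = if q ∈ M.init then 1 else 0 := by
  unfold beta
  rw [pathFinset_zero]
  split_ifs <;> simp

lemma alpha_zero (M : LTS Q S) (Acc : Set Q) (q : Q) :
    alpha M Acc 0 q = if q ∈ M.init ∧ q ∈ Acc then 1 else 0 := by
  unfold alpha
  rw [pathFinset_zero]
  by_cases h1 : q ∈ M.init
  · rw [if_pos h1, Finset.sum_singleton]
    by_cases h2 : q ∈ Acc
    · rw [if_pos ⟨h1, h2⟩]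
      simp [h2]
    · rw [if_neg (fun h => h2 h.2)]
      simp [h2]
  · rw [if_neg h1, if_neg (fun h => h1 h.1), Finset.sum_empty]


lemma xi_mulVec (M : LTS Q S) (Acc : Set Q) (x : ℕ) (α β : Q → ℕ) :
    (xi M Acc).mulVec (Sum.elim (fun _ => x) (Sum.elim α β)) =
    Sum.elim (fun _ => ∑ q : Q, α q)
      (Sum.elim
        (fun q => ∑ j : Q, predMatrix M q j * α j + ∑ j : Q, accMatrix M Acc q j * β j)
        (fun q => ∑ j : Q, predMatrix M q j * β j)) := by
  funext i
  rcases i with _ | (q | q) <;>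
    simp [Matrix.mulVec, dotProduct, xi, Fintype.sum_sum_type,
      Finset.sum_add_distrib]

lemma main_aux [DecidableEq Q] (M : LTS Q S) (Acc : Set Q) (n : ℕ) :
    (xi M Acc ^ (n + 1)).mulVec (initVec M Acc) =
      Sum.elim (fun _ => alphaTot M Acc n)
        (Sum.elim (fun q => alpha M Acc (n + 1) q) (fun q => beta M (n + 1) q)) := by
  induction n with
  | zero =>
    rw [pow_one]
    have hv : initVec M Acc = Sum.elim (fun _ => 0)
        (Sum.elim (fun q => alpha M Acc 0 q) (fun q => beta M 0 q)) := by
      funext i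
      rcases i with _ | (q | q) <;> simp [initVec, alpha_zero, beta_zero]
    rw [hv, xi_mulVec]
    funext i
    rcases i with _ | (q | q)
    · simp [alphaTot]
    · simp [alpha_succ]
    · simp [beta_succ]
  | succ n ih =>
    have : xi M Acc ^ (n + 1 + 1) = xi M Acc * xi M Acc ^ (n + 1) := by
      rw [pow_succ']
    rw [this, ← Matrix.mulVec_mulVec, ih, xi_mulVec]
    funext i
    rcases i with _ | (q | q)
    · simp [alphaTot]
    · simp [alpha_succ]
    · simp [beta_succ]

/-- For every `n ≥ 0`, `ξ^{n+1} ⬝ v = (α_n, α⃗_{n+1}, β⃗_{n+1})`; in particular the first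
entry of `ξ^{n+1} ⬝ v` equals `α_n`. -/
theorem stmt_6 [DecidableEq Q] (M : LTS Q S) (Acc : Set Q) (n : ℕ) :
    (xi M Acc ^ (n + 1)).mulVec (initVec M Acc) =
      Sum.elim (fun _ => alphaTot M Acc n)
        (Sum.elim (fun q => alpha M Acc (n + 1) q) (fun q => beta M (n + 1) q)) ∧
    (xi M Acc ^ (n + 1)).mulVec (initVec M Acc) (Sum.inl ()) = alphaTot M Acc n := by
  have h := main_aux M Acc n
  exact ⟨h, by rw [h]; rfl⟩
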